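/- In the instance of the truthfulness example, bidder optimal utilities can strictly increase when a bidder misreports a single valuation; consequently, no mechanism that always outputs a bidder optimal stable matching and prices (with respect to reported valuations) is truthful, even when all reserve prices are 0, maximum prices depend only on the bidder (m_{i,j} = m_i) and are pairwise distinct. -/

import Mathlib

open scoped Classical

noncomputable section

variable {I J : Type*}

/-- Utility `u_{i,j}(p_j) = v_{i,j} - p_j` if `p_j < m_{i,j}`, and `-∞` otherwise. -/
def util (v : I → J → ℝ) (m : I → J → EReal) (p : J → ℝ) (i : I) (j : J) : EReal :=
  if (p j : EReal) < m i j then ((v i j - p j : ℝ) : EReal) else ⊥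

/-- Utility of bidder `i` under matching `μ` (dummy item `j0` gives utility 0). -/
def bidderU (v : I → J → ℝ) (m : I → J → EReal) (j0 : J) (μ : I → J) (p : J → ℝ)
    (i : I) : EReal :=
  if μ i = j0 then 0 else util v m p i (μ i)

/-- Feasibility: `μ` is a matching (non-dummy items matched at most once), utilities are
nonnegative, prices are nonnegative with the dummy item priced at 0, and
`r_{i,j} ≤ p_j < m_{i,j}` on matched pairs. -/
def Feasible (v r : I → J → ℝ) (m : I → J → EReal) (j0 : J) (μ : I → J) (p : J → ℝ) : Prop :=
  (∀ i i', μ i = μ i' → μ i ≠ j0 → i = i') ∧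
  (∀ i, 0 ≤ bidderU v m j0 μ p i) ∧
  p j0 = 0 ∧ (∀ j, 0 ≤ p j) ∧
  (∀ i, r i (μ i) ≤ p (μ i) ∧ (p (μ i) : EReal) < m i (μ i))

/-- Stability: feasibility plus `u_i ≥ u_{i,j}(p_j)` for all bidder-item pairs. -/
def Stable (v r : I → J → ℝ) (m : I → J → EReal) (j0 : J) (μ : I → J) (p : J → ℝ) : Prop :=
  Feasible v r m j0 μ p ∧ ∀ i j, util v m p i j ≤ bidderU v m j0 μ p i

/-- Bidder optimality: stable, and every bidder weakly prefers it to every stable matching. -/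
def BidderOptimal (v r : I → J → ℝ) (m : I → J → EReal) (j0 : J) (μ : I → J) (p : J → ℝ) :
    Prop :=
  Stable v r m j0 μ p ∧
    ∀ μ' p', Stable v r m j0 μ' p' → ∀ i, bidderU v m j0 μ' p' i ≤ bidderU v m j0 μ p i

/-- Maximum prices that depend only on the bidder: `m_{i,j} = m_i` on real items, `∞` on
the dummy item. -/
def mOf (n k : ℕ) (mb : Fin n → ℝ) : Fin n → Option (Fin k) → EReal :=
  fun i j => if j = none then ⊤ else (mb i : EReal)

namespace BONT

attribute [local simp] Matrix.cons_val_two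

/-- Values on `Option (Fin 3)` induced by a 3×3 matrix, `0` on the dummy item. -/
def vOf (vm : Fin 3 → Fin 3 → ℝ) : Fin 3 → Option (Fin 3) → ℝ :=
  fun i j => j.elim 0 (vm i)

/-- Real-valued bidder utility. -/
def Ur (vm : Fin 3 → Fin 3 → ℝ) (μ : Fin 3 → Option (Fin 3)) (p : Option (Fin 3) → ℝ)
    (i : Fin 3) : ℝ :=
  (μ i).elim 0 (fun j => vm i j - p (some j))

def vmT : Fin 3 → Fin 3 → ℝ := ![![5,1,2], ![8,1,7], ![8,4,7]]
def vmF : Fin 3 → Fin 3 → ℝ := ![![5,8,2], ![8,1,7], ![8,4,7]]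
def mB : Fin 3 → ℝ := ![3,2,9]

/-- Real-level stability. -/
structure RS (vm : Fin 3 → Fin 3 → ℝ) (mb : Fin 3 → ℝ) (μ : Fin 3 → Option (Fin 3))
    (p : Option (Fin 3) → ℝ) : Prop where
  inj : ∀ i i', μ i = μ i' → μ i ≠ none → i = i'
  pos : ∀ j, 0 ≤ p j
  hm : ∀ i j, μ i = some j → p (some j) < mb i ∧ 0 ≤ vm i j - p (some j)
  envy : ∀ i j, p (some j) < mb i → vm i j - p (some j) ≤ Ur vm μ p i

lemma Ur_none {vm μ p} {i : Fin 3} (h : μ i = none) : Ur vm μ p i = 0 := by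
  simp [Ur, h]

lemma Ur_some {vm μ p} {i j : Fin 3} (h : μ i = some j) :
    Ur vm μ p i = vm i j - p (some j) := by
  simp [Ur, h]

lemma util_some_of_lt {vm : Fin 3 → Fin 3 → ℝ} {mb : Fin 3 → ℝ} {p : Option (Fin 3) → ℝ}
    {i j : Fin 3} (hc : p (some j) < mb i) :
    util (vOf vm) (mOf 3 3 mb) p i (some j) = ((vm i j - p (some j) : ℝ) : EReal) := by
  rw [util, if_pos]
  · rfl
  · simp only [mOf, reduceCtorEq, if_false]
    exact_mod_cast hc

lemma util_some_of_ge {vm : Fin 3 → Fin 3 → ℝ} {mb : Fin 3 → ℝ} {p : Option (Fin 3) → ℝ}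
    {i j : Fin 3} (hc : ¬ p (some j) < mb i) :
    util (vOf vm) (mOf 3 3 mb) p i (some j) = ⊥ := by
  rw [util, if_neg]
  simp only [mOf, reduceCtorEq, if_false]
  exact fun hlt => hc (by exact_mod_cast hlt)

lemma util_none {vm : Fin 3 → Fin 3 → ℝ} {mb : Fin 3 → ℝ} {p : Option (Fin 3) → ℝ}
    (hpn : p none = 0) (i : Fin 3) :
    util (vOf vm) (mOf 3 3 mb) p i none = (0 : EReal) := by
  rw [util, if_pos]
  · show ((vOf vm i none - p none : ℝ) : EReal) = 0
    simp [vOf, hpn]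
  · simp [mOf]

lemma bidderU_eq {vm : Fin 3 → Fin 3 → ℝ} {mb : Fin 3 → ℝ} {μ p}
    (hcap : ∀ i j, μ i = some j → p (some j) < mb i) (i : Fin 3) :
    bidderU (vOf vm) (mOf 3 3 mb) none μ p i = ((Ur vm μ p i : ℝ) : EReal) := by
  rcases hμ : μ i with _ | j
  · rw [bidderU, if_pos hμ, Ur_none hμ]
    simp
  · rw [bidderU, if_neg (by simp [hμ]), hμ, util_some_of_lt (hcap i j hμ), Ur_some hμ]

lemma real_of_stable {vm : Fin 3 → Fin 3 → ℝ} {mb : Fin 3 → ℝ} {μ p}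
    (hs : Stable (vOf vm) (fun _ _ => 0) (mOf 3 3 mb) none μ p) : RS vm mb μ p := by
  obtain ⟨⟨hinj, hnn, hpn, hpos, hfe⟩, hst⟩ := hs
  have hcap : ∀ i j, μ i = some j → p (some j) < mb i := by
    intro i j hij
    have h2 := (hfe i).2
    rw [hij] at h2
    simp only [mOf, reduceCtorEq, if_false] at h2
    exact_mod_cast h2
  refine ⟨hinj, hpos, ?_, ?_⟩
  · intro i j hij
    refine ⟨hcap i j hij, ?_⟩
    have h0 := hnn i
    rw [bidderU, if_neg (by simp [hij]), hij, util_some_of_lt (hcap i j hij)] at h0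
    exact_mod_cast h0
  · intro i j hc
    have h1 := hst i (some j)
    rw [util_some_of_lt hc, bidderU_eq hcap] at h1
    exact_mod_cast h1

lemma stable_of_real {vm : Fin 3 → Fin 3 → ℝ} {mb : Fin 3 → ℝ} {μ p}
    (h : RS vm mb μ p) (hpn : p none = 0) :
    Stable (vOf vm) (fun _ _ => 0) (mOf 3 3 mb) none μ p := by
  have hcap : ∀ i j, μ i = some j → p (some j) < mb i := fun i j hij => (h.hm i j hij).1
  have hU0 : ∀ i, 0 ≤ Ur vm μ p i := by
    intro i
    rcases hμ : μ i with _ | j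
    · rw [Ur_none hμ]
    · rw [Ur_some hμ]; exact (h.hm i j hμ).2
  refine ⟨⟨h.inj, ?_, hpn, h.pos, ?_⟩, ?_⟩
  · intro i
    rw [bidderU_eq hcap]
    exact_mod_cast hU0 i
  · intro i
    rcases hμ : μ i with _ | j
    · exact ⟨by simp [hpn], by simp [mOf]⟩
    · refine ⟨h.pos _, ?_⟩
      simp only [mOf, reduceCtorEq, if_false]
      exact_mod_cast (h.hm i j hμ).1
  · intro i j
    rcases j with _ | j
    · rw [util_none hpn, bidderU_eq hcap]
      exact_mod_cast hU0 i
    · by_cases hc : p (some j) < mb i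
      · rw [util_some_of_lt hc, bidderU_eq hcap]
        exact_mod_cast h.envy i j hc
      · rw [util_some_of_ge hc]
        exact bot_le

lemma envNum {vm mb μ p} (h : RS vm mb μ p) (i j : Fin 3) (a b : ℝ)
    (hv : vm i j = a) (hb : mb i = b) (hc : p (some j) < b) :
    a - p (some j) ≤ Ur vm μ p i := by
  have := h.envy i j (by rw [hb]; exact hc)
  rwa [hv] at this

lemma matchNum {vm mb μ p} (h : RS vm mb μ p) {i j : Fin 3} (hμ : μ i = some j) (a b : ℝ)
    (hv : vm i j = a) (hb : mb i = b) :
    p (some j) < b ∧ 0 ≤ a - p (some j) := by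
  obtain ⟨h1, h2⟩ := h.hm i j hμ
  rw [hb] at h1; rw [hv] at h2
  exact ⟨h1, h2⟩

lemma injNe {vm mb μ p} (h : RS vm mb μ p) {i i' : Fin 3} {j : Fin 3}
    (hne : i ≠ i') (h1 : μ i = some j) : μ i' ≠ some j := by
  intro h2
  exact hne (h.inj i i' (h1.trans h2.symm) (by simp [h1]))

lemma ofin3 : ∀ o : Option (Fin 3), o = none ∨ o = some 0 ∨ o = some 1 ∨ o = some 2 := by
  decide

section Bounds

variable {μ : Fin 3 → Option (Fin 3)} {p : Option (Fin 3) → ℝ}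

/-- In any truth-stable outcome bidder 0 cannot hold item 0. -/
lemma notA0 (h : RS vmT mB μ p) : μ 0 ≠ some 0 := by
  intro hμ0
  have P0 := h.pos (some 0); have P1 := h.pos (some 1); have P2 := h.pos (some 2)
  obtain ⟨hA3, -⟩ := matchNum h hμ0 5 3 (by norm_num [vmT, Matrix.vecHead, Matrix.vecTail]) (by norm_num [mB, Matrix.vecHead, Matrix.vecTail])
  rcases ofin3 (μ 1) with hμ1 | hμ1 | hμ1 | hμ1
  · by_cases h2 : p (some 0) < 2
    · have e := envNum h 1 0 8 2 (by norm_num [vmT, Matrix.vecHead, Matrix.vecTail]) (by norm_num [mB, Matrix.vecHead, Matrix.vecTail]) h2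
      rw [Ur_none hμ1] at e; linarith
    · push_neg at h2
      have e20 := envNum h 2 0 8 9 (by norm_num [vmT, Matrix.vecHead, Matrix.vecTail]) (by norm_num [mB, Matrix.vecHead, Matrix.vecTail]) (by linarith)
      rcases ofin3 (μ 2) with hμ2 | hμ2 | hμ2 | hμ2
      · rw [Ur_none hμ2] at e20; linarith
      · exact absurd hμ2 (injNe h (by decide) hμ0)
      · rw [Ur_some hμ2] at e20; norm_num [vmT, Matrix.vecHead, Matrix.vecTail] at e20; linarith
      · rw [Ur_some hμ2] at e20; norm_num [vmT, Matrix.vecHead, Matrix.vecTail] at e20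
        have e12 := envNum h 1 2 7 2 (by norm_num [vmT, Matrix.vecHead, Matrix.vecTail]) (by norm_num [mB, Matrix.vecHead, Matrix.vecTail]) (by linarith)
        rw [Ur_none hμ1] at e12; linarith
  · exact absurd hμ1 (injNe h (by decide) hμ0)
  · by_cases h2 : p (some 0) < 2
    · have e := envNum h 1 0 8 2 (by norm_num [vmT, Matrix.vecHead, Matrix.vecTail]) (by norm_num [mB, Matrix.vecHead, Matrix.vecTail]) h2
      rw [Ur_some hμ1] at e; norm_num [vmT, Matrix.vecHead, Matrix.vecTail] at e; linarith
    · push_neg at h2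
      have e20 := envNum h 2 0 8 9 (by norm_num [vmT, Matrix.vecHead, Matrix.vecTail]) (by norm_num [mB, Matrix.vecHead, Matrix.vecTail]) (by linarith)
      rcases ofin3 (μ 2) with hμ2 | hμ2 | hμ2 | hμ2
      · rw [Ur_none hμ2] at e20; linarith
      · exact absurd hμ2 (injNe h (by decide) hμ0)
      · exact absurd hμ2 (injNe h (by decide) hμ1)
      · rw [Ur_some hμ2] at e20; norm_num [vmT, Matrix.vecHead, Matrix.vecTail] at e20
        have e12 := envNum h 1 2 7 2 (by norm_num [vmT, Matrix.vecHead, Matrix.vecTail]) (by norm_num [mB, Matrix.vecHead, Matrix.vecTail]) (by linarith)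
        rw [Ur_some hμ1] at e12; norm_num [vmT, Matrix.vecHead, Matrix.vecTail] at e12; linarith
  · obtain ⟨hC2, -⟩ := matchNum h hμ1 7 2 (by norm_num [vmT, Matrix.vecHead, Matrix.vecTail]) (by norm_num [mB, Matrix.vecHead, Matrix.vecTail])
    by_cases h2 : p (some 0) < 2
    · have e := envNum h 1 0 8 2 (by norm_num [vmT, Matrix.vecHead, Matrix.vecTail]) (by norm_num [mB, Matrix.vecHead, Matrix.vecTail]) h2
      rw [Ur_some hμ1] at e; norm_num [vmT, Matrix.vecHead, Matrix.vecTail] at e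
      have e22 := envNum h 2 2 7 9 (by norm_num [vmT, Matrix.vecHead, Matrix.vecTail]) (by norm_num [mB, Matrix.vecHead, Matrix.vecTail]) (by linarith)
      rcases ofin3 (μ 2) with hμ2 | hμ2 | hμ2 | hμ2
      · rw [Ur_none hμ2] at e22; linarith
      · exact absurd hμ2 (injNe h (by decide) hμ0)
      · rw [Ur_some hμ2] at e22; norm_num [vmT, Matrix.vecHead, Matrix.vecTail] at e22; linarith
      · exact absurd hμ2 (injNe h (by decide) hμ1)
    · push_neg at h2
      have e20 := envNum h 2 0 8 9 (by norm_num [vmT, Matrix.vecHead, Matrix.vecTail]) (by norm_num [mB, Matrix.vecHead, Matrix.vecTail]) (by linarith)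
      rcases ofin3 (μ 2) with hμ2 | hμ2 | hμ2 | hμ2
      · rw [Ur_none hμ2] at e20; linarith
      · exact absurd hμ2 (injNe h (by decide) hμ0)
      · rw [Ur_some hμ2] at e20; norm_num [vmT, Matrix.vecHead, Matrix.vecTail] at e20; linarith
      · exact absurd hμ2 (injNe h (by decide) hμ1)

/-- In any truth-stable outcome bidder 1 cannot hold item 0. -/
lemma notA1 (h : RS vmT mB μ p) : μ 1 ≠ some 0 := by
  intro hμ1
  have P0 := h.pos (some 0); have P1 := h.pos (some 1); have P2 := h.pos (some 2)
  obtain ⟨hA2, -⟩ := matchNum h hμ1 8 2 (by norm_num [vmT, Matrix.vecHead, Matrix.vecTail]) (by norm_num [mB, Matrix.vecHead, Matrix.vecTail])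
  have e20 := envNum h 2 0 8 9 (by norm_num [vmT, Matrix.vecHead, Matrix.vecTail]) (by norm_num [mB, Matrix.vecHead, Matrix.vecTail]) (by linarith)
  rcases ofin3 (μ 2) with hμ2 | hμ2 | hμ2 | hμ2
  · rw [Ur_none hμ2] at e20; linarith
  · exact absurd hμ2 (injNe h (by decide) hμ1)
  · rw [Ur_some hμ2] at e20; norm_num [vmT, Matrix.vecHead, Matrix.vecTail] at e20; linarith
  · rw [Ur_some hμ2] at e20; norm_num [vmT, Matrix.vecHead, Matrix.vecTail] at e20
    have e02 := envNum h 0 2 2 3 (by norm_num [vmT, Matrix.vecHead, Matrix.vecTail]) (by norm_num [mB, Matrix.vecHead, Matrix.vecTail]) (by linarith)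
    rcases ofin3 (μ 0) with hμ0 | hμ0 | hμ0 | hμ0
    · rw [Ur_none hμ0] at e02; linarith
    · exact absurd hμ0 (injNe h (by decide) hμ1)
    · rw [Ur_some hμ0] at e02; norm_num [vmT, Matrix.vecHead, Matrix.vecTail] at e02; linarith
    · exact absurd hμ0 (injNe h (by decide) hμ2)

/-- In any truth-stable outcome bidder 1 cannot hold item 2. -/
lemma notC1 (h : RS vmT mB μ p) : μ 1 ≠ some 2 := by
  intro hμ1
  have P0 := h.pos (some 0); have P1 := h.pos (some 1); have P2 := h.pos (some 2)
  obtain ⟨hC2, -⟩ := matchNum h hμ1 7 2 (by norm_num [vmT, Matrix.vecHead, Matrix.vecTail]) (by norm_num [mB, Matrix.vecHead, Matrix.vecTail])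
  have e22 := envNum h 2 2 7 9 (by norm_num [vmT, Matrix.vecHead, Matrix.vecTail]) (by norm_num [mB, Matrix.vecHead, Matrix.vecTail]) (by linarith)
  rcases ofin3 (μ 2) with hμ2 | hμ2 | hμ2 | hμ2
  · rw [Ur_none hμ2] at e22; linarith
  · rw [Ur_some hμ2] at e22; norm_num [vmT, Matrix.vecHead, Matrix.vecTail] at e22
    obtain ⟨hA9, -⟩ := matchNum h hμ2 8 9 (by norm_num [vmT, Matrix.vecHead, Matrix.vecTail]) (by norm_num [mB, Matrix.vecHead, Matrix.vecTail])
    have e00 := envNum h 0 0 5 3 (by norm_num [vmT, Matrix.vecHead, Matrix.vecTail]) (by norm_num [mB, Matrix.vecHead, Matrix.vecTail]) (by linarith)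
    rcases ofin3 (μ 0) with hμ0 | hμ0 | hμ0 | hμ0
    · rw [Ur_none hμ0] at e00; linarith
    · exact absurd hμ0 (injNe h (by decide) hμ2)
    · rw [Ur_some hμ0] at e00; norm_num [vmT, Matrix.vecHead, Matrix.vecTail] at e00; linarith
    · exact absurd hμ0 (injNe h (by decide) hμ1)
  · rw [Ur_some hμ2] at e22; norm_num [vmT, Matrix.vecHead, Matrix.vecTail] at e22; linarith
  · exact absurd hμ2 (injNe h (by decide) hμ1)

lemma bound0 (h : RS vmT mB μ p) : Ur vmT μ p 0 ≤ 0 := by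
  have P0 := h.pos (some 0); have P1 := h.pos (some 1); have P2 := h.pos (some 2)
  rcases ofin3 (μ 0) with hμ0 | hμ0 | hμ0 | hμ0
  · rw [Ur_none hμ0]
  · exact absurd hμ0 (notA0 h)
  · rw [Ur_some hμ0]; norm_num [vmT, Matrix.vecHead, Matrix.vecTail]
    by_cases hc : p (some 1) < 2
    · have e11 := envNum h 1 1 1 2 (by norm_num [vmT, Matrix.vecHead, Matrix.vecTail]) (by norm_num [mB, Matrix.vecHead, Matrix.vecTail]) hc
      rcases ofin3 (μ 1) with hμ1 | hμ1 | hμ1 | hμ1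
      · rw [Ur_none hμ1] at e11; linarith
      · exact absurd hμ1 (notA1 h)
      · exact absurd hμ1 (injNe h (by decide) hμ0)
      · exact absurd hμ1 (notC1 h)
    · push_neg at hc; linarith
  · rw [Ur_some hμ0]; norm_num [vmT, Matrix.vecHead, Matrix.vecTail]
    by_cases hc : p (some 2) < 2
    · have e12 := envNum h 1 2 7 2 (by norm_num [vmT, Matrix.vecHead, Matrix.vecTail]) (by norm_num [mB, Matrix.vecHead, Matrix.vecTail]) hc
      rcases ofin3 (μ 1) with hμ1 | hμ1 | hμ1 | hμ1
      · rw [Ur_none hμ1] at e12; linarith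
      · exact absurd hμ1 (notA1 h)
      · rw [Ur_some hμ1] at e12; norm_num [vmT, Matrix.vecHead, Matrix.vecTail] at e12; linarith
      · exact absurd hμ1 (notC1 h)
    · push_neg at hc; linarith

lemma bound1 (h : RS vmT mB μ p) : Ur vmT μ p 1 ≤ 0 := by
  have P1 := h.pos (some 1)
  rcases ofin3 (μ 1) with hμ1 | hμ1 | hμ1 | hμ1
  · rw [Ur_none hμ1]
  · exact absurd hμ1 (notA1 h)
  · rw [Ur_some hμ1]; norm_num [vmT, Matrix.vecHead, Matrix.vecTail]
    by_cases hc : p (some 1) < 3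
    · have e01 := envNum h 0 1 1 3 (by norm_num [vmT, Matrix.vecHead, Matrix.vecTail]) (by norm_num [mB, Matrix.vecHead, Matrix.vecTail]) hc
      have := bound0 h; linarith
    · push_neg at hc; linarith
  · exact absurd hμ1 (notC1 h)

lemma bound2 (h : RS vmT mB μ p) : Ur vmT μ p 2 ≤ 5 := by
  have P0 := h.pos (some 0); have P1 := h.pos (some 1); have P2 := h.pos (some 2)
  rcases ofin3 (μ 2) with hμ2 | hμ2 | hμ2 | hμ2
  · rw [Ur_none hμ2]; norm_num
  · rw [Ur_some hμ2]; norm_num [vmT, Matrix.vecHead, Matrix.vecTail]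
    by_cases hc : p (some 0) < 3
    · have e00 := envNum h 0 0 5 3 (by norm_num [vmT, Matrix.vecHead, Matrix.vecTail]) (by norm_num [mB, Matrix.vecHead, Matrix.vecTail]) hc
      have := bound0 h; linarith
    · push_neg at hc; linarith
  · rw [Ur_some hμ2]; norm_num [vmT, Matrix.vecHead, Matrix.vecTail]; linarith
  · rw [Ur_some hμ2]; norm_num [vmT, Matrix.vecHead, Matrix.vecTail]
    by_cases hc : p (some 2) < 2
    · have e12 := envNum h 1 2 7 2 (by norm_num [vmT, Matrix.vecHead, Matrix.vecTail]) (by norm_num [mB, Matrix.vecHead, Matrix.vecTail]) hc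
      have := bound1 h; linarith
    · push_neg at hc; linarith

lemma fbound0 (h : RS vmF mB μ p) : Ur vmF μ p 0 ≤ 8 := by
  have P0 := h.pos (some 0); have P1 := h.pos (some 1); have P2 := h.pos (some 2)
  rcases ofin3 (μ 0) with hμ0 | hμ0 | hμ0 | hμ0
  · rw [Ur_none hμ0]; norm_num
  · rw [Ur_some hμ0]; norm_num [vmF, Matrix.vecHead, Matrix.vecTail]; linarith
  · rw [Ur_some hμ0]; norm_num [vmF, Matrix.vecHead, Matrix.vecTail]; linarith
  · rw [Ur_some hμ0]; norm_num [vmF, Matrix.vecHead, Matrix.vecTail]; linarith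

lemma fbound1 (h : RS vmF mB μ p) : Ur vmF μ p 1 ≤ 7 := by
  have P0 := h.pos (some 0); have P1 := h.pos (some 1); have P2 := h.pos (some 2)
  rcases ofin3 (μ 1) with hμ1 | hμ1 | hμ1 | hμ1
  · rw [Ur_none hμ1]; norm_num
  · rw [Ur_some hμ1]; norm_num [vmF, Matrix.vecHead, Matrix.vecTail]
    obtain ⟨hA2, -⟩ := matchNum h hμ1 8 2 (by norm_num [vmF, Matrix.vecHead, Matrix.vecTail]) (by norm_num [mB, Matrix.vecHead, Matrix.vecTail])
    have e20 := envNum h 2 0 8 9 (by norm_num [vmF, Matrix.vecHead, Matrix.vecTail]) (by norm_num [mB, Matrix.vecHead, Matrix.vecTail]) (by linarith)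
    rcases ofin3 (μ 2) with hμ2 | hμ2 | hμ2 | hμ2
    · rw [Ur_none hμ2] at e20; linarith
    · exact absurd hμ2 (injNe h (by decide) hμ1)
    · rw [Ur_some hμ2] at e20; norm_num [vmF, Matrix.vecHead, Matrix.vecTail] at e20; linarith
    · rw [Ur_some hμ2] at e20; norm_num [vmF, Matrix.vecHead, Matrix.vecTail] at e20; linarith
  · rw [Ur_some hμ1]; norm_num [vmF, Matrix.vecHead, Matrix.vecTail]; linarith
  · rw [Ur_some hμ1]; norm_num [vmF, Matrix.vecHead, Matrix.vecTail]; linarith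

lemma fbound2 (h : RS vmF mB μ p) : Ur vmF μ p 2 ≤ 7 := by
  have P0 := h.pos (some 0); have P1 := h.pos (some 1); have P2 := h.pos (some 2)
  rcases ofin3 (μ 2) with hμ2 | hμ2 | hμ2 | hμ2
  · rw [Ur_none hμ2]; norm_num
  · rw [Ur_some hμ2]; norm_num [vmF, Matrix.vecHead, Matrix.vecTail]
    by_cases hc : p (some 0) < 2
    · have e10 := envNum h 1 0 8 2 (by norm_num [vmF, Matrix.vecHead, Matrix.vecTail]) (by norm_num [mB, Matrix.vecHead, Matrix.vecTail]) hc
      rcases ofin3 (μ 1) with hμ1 | hμ1 | hμ1 | hμ1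
      · rw [Ur_none hμ1] at e10; linarith
      · exact absurd hμ1 (injNe h (by decide) hμ2)
      · rw [Ur_some hμ1] at e10; norm_num [vmF, Matrix.vecHead, Matrix.vecTail] at e10; linarith
      · rw [Ur_some hμ1] at e10; norm_num [vmF, Matrix.vecHead, Matrix.vecTail] at e10; linarith
    · push_neg at hc; linarith
  · rw [Ur_some hμ2]; norm_num [vmF, Matrix.vecHead, Matrix.vecTail]; linarith
  · rw [Ur_some hμ2]; norm_num [vmF, Matrix.vecHead, Matrix.vecTail]; linarith

/-- Pinning: any fake-stable outcome giving bidder 0 reported utility 8 matches her to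
item 1 at price 0. -/
lemma pin (h : RS vmF mB μ p) (h8 : Ur vmF μ p 0 = 8) :
    μ 0 = some 1 ∧ p (some 1) = 0 := by
  have P0 := h.pos (some 0); have P1 := h.pos (some 1); have P2 := h.pos (some 2)
  rcases ofin3 (μ 0) with hμ0 | hμ0 | hμ0 | hμ0
  · rw [Ur_none hμ0] at h8; norm_num at h8
  · rw [Ur_some hμ0] at h8; norm_num [vmF, Matrix.vecHead, Matrix.vecTail] at h8; linarith
  · rw [Ur_some hμ0] at h8; norm_num [vmF, Matrix.vecHead, Matrix.vecTail] at h8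
    exact ⟨hμ0, by linarith⟩
  · rw [Ur_some hμ0] at h8; norm_num [vmF, Matrix.vecHead, Matrix.vecTail] at h8; linarith

end Bounds

lemma fin3 : ∀ i : Fin 3, i = 0 ∨ i = 1 ∨ i = 2 := by decide

/-- Truth witness: bidder 2 gets item 0 at price 3, prices (3,1,2). -/
def μT : Fin 3 → Option (Fin 3) := ![none, none, some 0]
def pT : Option (Fin 3) → ℝ := fun o => o.elim 0 ![3,1,2]

/-- Fake witness: matching (0↦1, 1↦0, 2↦2), prices (1,0,0). -/
def μF : Fin 3 → Option (Fin 3) := ![some 1, some 0, some 2]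
def pF : Option (Fin 3) → ℝ := fun o => o.elim 0 ![1,0,0]

lemma RS_T : RS vmT mB μT pT := by
  refine ⟨by decide, ?_, ?_, ?_⟩
  · rintro (_ | j)
    · norm_num [pT]
    · fin_cases j <;> norm_num [pT, Matrix.vecHead, Matrix.vecTail]
  · intro i j hij
    fin_cases i <;> simp [μT, Matrix.vecHead, Matrix.vecTail] at hij ⊢ <;>
      subst hij <;> norm_num [pT, mB, vmT, Matrix.vecHead, Matrix.vecTail]
  · intro i j
    fin_cases i <;> fin_cases j <;>
      norm_num [pT, mB, vmT, Ur, μT, Matrix.vecHead, Matrix.vecTail]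

lemma RS_F : RS vmF mB μF pF := by
  refine ⟨by decide, ?_, ?_, ?_⟩
  · rintro (_ | j)
    · norm_num [pF]
    · fin_cases j <;> norm_num [pF, Matrix.vecHead, Matrix.vecTail]
  · intro i j hij
    fin_cases i <;> simp [μF, Matrix.vecHead, Matrix.vecTail] at hij ⊢ <;>
      subst hij <;> norm_num [pF, mB, vmF, Matrix.vecHead, Matrix.vecTail]
  · intro i j
    fin_cases i <;> fin_cases j <;>
      norm_num [pF, mB, vmF, Ur, μF, Matrix.vecHead, Matrix.vecTail]

lemma UrT0 : Ur vmT μT pT 0 = 0 := by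
  norm_num [Ur, μT, pT, vmT, Matrix.vecHead, Matrix.vecTail]
lemma UrT1 : Ur vmT μT pT 1 = 0 := by
  norm_num [Ur, μT, pT, vmT, Matrix.vecHead, Matrix.vecTail]
lemma UrT2 : Ur vmT μT pT 2 = 5 := by
  norm_num [Ur, μT, pT, vmT, Matrix.vecHead, Matrix.vecTail]
lemma UrF0 : Ur vmF μF pF 0 = 8 := by
  norm_num [Ur, μF, pF, vmF, Matrix.vecHead, Matrix.vecTail]
lemma UrF1 : Ur vmF μF pF 1 = 7 := by
  norm_num [Ur, μF, pF, vmF, Matrix.vecHead, Matrix.vecTail]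
lemma UrF2 : Ur vmF μF pF 2 = 7 := by
  norm_num [Ur, μF, pF, vmF, Matrix.vecHead, Matrix.vecTail]

lemma BO_T : BidderOptimal (vOf vmT) (fun _ _ => 0) (mOf 3 3 mB) none μT pT := by
  refine ⟨stable_of_real RS_T rfl, ?_⟩
  intro μ' p' hs' i
  have h := real_of_stable hs'
  have capT : ∀ i j, μ' i = some j → p' (some j) < mB i := fun i j hij => (h.hm i j hij).1
  have capW : ∀ i j, μT i = some j → pT (some j) < mB i := fun i j hij => (RS_T.hm i j hij).1
  rw [bidderU_eq capT i, bidderU_eq capW i, EReal.coe_le_coe_iff]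
  rcases fin3 i with rfl | rfl | rfl
  · rw [UrT0]; exact bound0 h
  · rw [UrT1]; exact bound1 h
  · rw [UrT2]; exact bound2 h

lemma BO_F : BidderOptimal (vOf vmF) (fun _ _ => 0) (mOf 3 3 mB) none μF pF := by
  refine ⟨stable_of_real RS_F rfl, ?_⟩
  intro μ' p' hs' i
  have h := real_of_stable hs'
  have capF : ∀ i j, μ' i = some j → p' (some j) < mB i := fun i j hij => (h.hm i j hij).1
  have capW : ∀ i j, μF i = some j → pF (some j) < mB i := fun i j hij => (RS_F.hm i j hij).1
  rw [bidderU_eq capF i, bidderU_eq capW i, EReal.coe_le_coe_iff]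
  rcases fin3 i with rfl | rfl | rfl
  · rw [UrF0]; exact fbound0 h
  · rw [UrF1]; exact fbound1 h
  · rw [UrF2]; exact fbound2 h

end BONT

open BONT

/-- there is an instance with zero reserve prices and pairwise distinct,
bidder-dependent maximum prices in which bidder optimal stable matchings exist for the true
and for some falsified valuations (differing in a single entry), and the misreporting
bidder's true utility is strictly larger under every bidder optimal outcome for the
falsified valuations than under every bidder optimal outcome for the true valuations.
Hence no mechanism computing bidder optimal outcomes is truthful. -/
theorem bidder_optimal_not_truthful :
    ∃ (n k : ℕ) (v v' : Fin n → Option (Fin k) → ℝ) (mb : Fin n → ℝ)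
      (i₀ : Fin n) (j₀ : Fin k),
      Function.Injective mb ∧
      (∀ i, v i none = 0 ∧ v' i none = 0) ∧
      (∀ i j, (i, j) ≠ (i₀, some j₀) → v' i j = v i j) ∧
      (∃ μ p, BidderOptimal v (fun _ _ => 0) (mOf n k mb) none μ p) ∧
      (∃ μ' p', BidderOptimal v' (fun _ _ => 0) (mOf n k mb) none μ' p') ∧
      (∀ μ p μ' p',
        BidderOptimal v (fun _ _ => 0) (mOf n k mb) none μ p →
        BidderOptimal v' (fun _ _ => 0) (mOf n k mb) none μ' p' →
        bidderU v (mOf n k mb) none μ p i₀ < bidderU v (mOf n k mb) none μ' p' i₀) := by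
  refine ⟨3, 3, vOf vmT, vOf vmF, mB, 0, 1, ?_, ?_, ?_, ⟨μT, pT, BO_T⟩, ⟨μF, pF, BO_F⟩, ?_⟩
  · intro a b hab
    fin_cases a <;> fin_cases b <;>
      first
        | rfl
        | (exfalso; norm_num [mB, Matrix.vecHead, Matrix.vecTail] at hab)
  · intro i; exact ⟨rfl, rfl⟩
  · intro i j hne
    rcases j with _ | j
    · rfl
    · fin_cases i <;> fin_cases j <;>
        first
          | (exact absurd rfl hne)
          | norm_num [vOf, vmT, vmF, Matrix.vecHead, Matrix.vecTail]
  · intro μ p μ' p' hBO hBO'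
    have hT := real_of_stable hBO.1
    have hFr := real_of_stable hBO'.1
    have capT : ∀ i j, μ i = some j → p (some j) < mB i := fun i j hij => (hT.hm i j hij).1
    have capF : ∀ i j, μ' i = some j → p' (some j) < mB i := fun i j hij => (hFr.hm i j hij).1
    have capW : ∀ i j, μF i = some j → pF (some j) < mB i := fun i j hij => (RS_F.hm i j hij).1
    -- the fake BO gives bidder 0 reported utility exactly 8
    have h1 := hBO'.2 μF pF (stable_of_real RS_F rfl) 0
    rw [bidderU_eq capF 0, bidderU_eq capW 0, EReal.coe_le_coe_iff, UrF0] at h1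
    have h8 : Ur vmF μ' p' 0 = 8 := le_antisymm (fbound0 hFr) h1
    obtain ⟨hμ'0, hpB⟩ := pin hFr h8
    -- compute bidder 0's true utility at the fake BO outcome
    have hR : bidderU (vOf vmT) (mOf 3 3 mB) none μ' p' 0 = ((1 : ℝ) : EReal) := by
      rw [bidderU, if_neg (by simp [hμ'0]), hμ'0,
        util_some_of_lt (show p' (some 1) < mB 0 by
          rw [hpB]; norm_num [mB, Matrix.vecHead, Matrix.vecTail])]
      norm_num [vmT, hpB, Matrix.vecHead, Matrix.vecTail]
    rw [hR]
    have hL : bidderU (vOf vmT) (mOf 3 3 mB) none μ p 0 ≤ ((0 : ℝ) : EReal) := by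
      rw [bidderU_eq capT 0]
      exact_mod_cast bound0 hT
    exact lt_of_le_of_lt hL (by exact_mod_cast (by norm_num : (0:ℝ) < 1))
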